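/- Let B and A be directed algebras and endow Λ = 𝒜(B, A^op) with the alternate grading (idempotents and arrows coming from A^op in degree 0, arrows coming from B in degree 1). If Λ is left standard Koszul, then the homological grading and the internal grading on Ext*_Λ(Δ, Δ) coincide. -/

import Mathlib

noncomputable section

universe u

/-- Data of a complete set of orthogonal idempotents indexed by the vertices `Fin n`
of a quiver, inside a `K`-algebra. -/
structure IdemData (K : Type u) [Field K] (n : ℕ) (B : Type u) [Ring B] [Algebra K B] where
  e : Fin n → B
  orth : ∀ i j, e i * e j = if i = j then e i else 0
  complete : ∑ i, e i = 1

namespace IdemData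

variable {K : Type u} [Field K] {n : ℕ} {B : Type u} [Ring B] [Algebra K B]

/-- Membership in the radical of a directed algebra: all "diagonal components" vanish.
For a directed (triangular, basic) algebra this is exactly the Jacobson radical. -/
def IsRad (d : IdemData K n B) (b : B) : Prop := ∀ i, d.e i * b * d.e i = 0

/-- A directed algebra: finite dimensional, basic, whose (Gabriel) quiver is acyclic with all
arrows `i ⟶ j` satisfying `i < j`.  Equivalently: `e j * B * e i = 0` for `j < i` and the
"diagonal" components `e i * B * e i` are one-dimensional. -/
def Directed (d : IdemData K n B) : Prop :=
  FiniteDimensional K B ∧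
  (∀ i j : Fin n, j < i → ∀ b : B, d.e j * b * d.e i = 0) ∧
  (∀ i : Fin n, ∀ b : B, ∃ c : K, d.e i * b * d.e i = c • d.e i)

/-- The opposite of a directed algebra (all arrows decrease); `A^op` for `A` directed. -/
def Codirected (d : IdemData K n B) : Prop :=
  FiniteDimensional K B ∧
  (∀ i j : Fin n, i < j → ∀ b : B, d.e j * b * d.e i = 0) ∧
  (∀ i : Fin n, ∀ b : B, ∃ c : K, d.e i * b * d.e i = c • d.e i)

/-- The indecomposable projective left module `P(i) = B·e i`, realized as the left ideal
`{x | x * e i = x}`. -/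
def proj (d : IdemData K n B) (i : Fin n) : Submodule B B where
  carrier := {x | x * d.e i = x}
  add_mem' := by
    intro a b ha hb
    simp only [Set.mem_setOf_eq] at *
    rw [add_mul, ha, hb]
  zero_mem' := by simp
  smul_mem' := by
    intro c x hx
    simp only [Set.mem_setOf_eq, smul_eq_mul] at *
    rw [mul_assoc, hx]

end IdemData

/-- The bilinear "multiplication" map `C ⊗ B → Λ`, `(c, b) ↦ ιC c * ιB b`. -/
def dualBil {K : Type u} [Field K] {B C L : Type u} [Ring B] [Algebra K B] [Ring C] [Algebra K C]
    [Ring L] [Algebra K L] (ιB : B →ₐ[K] L) (ιC : C →ₐ[K] L) : C →ₗ[K] B →ₗ[K] L :=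
  LinearMap.mk₂ K (fun c b => ιC c * ιB b)
    (fun c c' b => by simp only [map_add, add_mul])
    (fun k c b => by simp only [map_smul, smul_mul_assoc])
    (fun c b b' => by simp only [map_add, mul_add])
    (fun k c b => by simp only [map_smul, mul_smul_comm])

/-- `Λ` is the dual extension algebra `𝒜(B, C)` of `B` and `C` (in the paper `C = A^op`):
`B` and `C` embed as subalgebras, sharing the idempotents; the product of a radical element of
`B` with a radical element of `C` (in this order; i.e. all paths `α β'`) vanishes; and the
products `ιC c * ιB b` span `Λ`, the only linear relations among them being the ones forced by
`ιC (c e_i) * ιB (e_j b) = 0` for `i ≠ j`.  This encodes `Λ ≅ ⊕_i C e_i ⊗ e_i B` as in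
`Definition 2.1` of the paper. -/
structure DualExt (K : Type u) [Field K] (n : ℕ) (B C L : Type u) [Ring B] [Algebra K B]
    [Ring C] [Algebra K C] [Ring L] [Algebra K L]
    (dB : IdemData K n B) (dC : IdemData K n C) where
  ιB : B →ₐ[K] L
  ιC : C →ₐ[K] L
  injB : Function.Injective ιB
  injC : Function.Injective ιC
  idem : ∀ i, ιB (dB.e i) = ιC (dC.e i)
  radMul : ∀ b c, dB.IsRad b → dC.IsRad c → ιB b * ιC c = 0
  spans : Submodule.span K {x : L | ∃ c b, x = ιC c * ιB b} = ⊤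
  mulKer : LinearMap.ker (TensorProduct.lift (dualBil ιB ιC)) =
    Submodule.span K {x : TensorProduct K C B |
      ∃ i j : Fin n, i ≠ j ∧ ∃ c b, x = (c * dC.e i) ⊗ₜ[K] (dB.e j * b)}

/-- The left ideal `{x | x * a = x}`; for an idempotent `a = e i` this is the
indecomposable projective module `P(i) = B e i`. -/
def leftIdeal {L : Type u} [Ring L] (a : L) : Submodule L L where
  carrier := {x | x * a = x}
  add_mem' := by
    intro x y hx hy
    simp only [Set.mem_setOf_eq] at *
    rw [add_mul, hx, hy]
  zero_mem' := by simp
  smul_mem' := by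
    intro c x hx
    simp only [Set.mem_setOf_eq, smul_eq_mul] at *
    rw [mul_assoc, hx]
/-- A projective resolution `⋯ → P 1 → P 0 → M → 0` of the module `M` over `R`. -/
structure ProjRes (K : Type u) [Field K] (R : Type u) [Ring R] [Algebra K R]
    (M : Type u) [AddCommGroup M] [Module R M] where
  P : ℕ → Type u
  [acg : ∀ k, AddCommGroup (P k)]
  [mod : ∀ k, Module R (P k)]
  d : ∀ k, P (k + 1) →ₗ[R] P k
  aug : P 0 →ₗ[R] M
  proj : ∀ k, Module.Projective R (P k)
  aug_surj : Function.Surjective aug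
  exact0 : LinearMap.ker aug = LinearMap.range (d 0)
  exact : ∀ k, LinearMap.ker (d k) = LinearMap.range (d (k + 1))

attribute [instance] ProjRes.acg ProjRes.mod

/-- Minimality of a projective resolution: the differentials are radical maps,
`im (d k) ⊆ rad R · P k` (the radical being described by the idempotent data). -/
def ProjRes.Minimal {K : Type u} [Field K] {R : Type u} [Ring R] [Algebra K R]
    {M : Type u} [AddCommGroup M] [Module R M] {n : ℕ}
    (dd : IdemData K n R) (Q : ProjRes K R M) : Prop :=
  ∀ k, LinearMap.range (Q.d k) ≤
    Submodule.span R {x : Q.P k | ∃ b m, dd.IsRad b ∧ x = b • m}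

/-- `S` is (a copy of) the simple module `L(i)` at the vertex `i`: it is simple and the
idempotent `e i` acts as the identity on it. -/
def IdemData.IsSimpleAt {K : Type u} [Field K] {n : ℕ} {B : Type u} [Ring B] [Algebra K B]
    (d : IdemData K n B) (i : Fin n) (S : Type u) [AddCommGroup S] [Module B S] : Prop :=
  IsSimpleModule B S ∧ ∀ s : S, d.e i • s = s

/-- The standard module `Δ_Λ(i) = Λe_i / Λ·(rad B)·e_i` of the dual extension algebra
(the quotient of the indecomposable projective `P_Λ(i)` by the span of the images of all
maps from `P_Λ(j)`, `j > i`, equivalently by `Λ·(rad B)·e i`). -/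
def DualExt.std {K : Type u} [Field K] {n : ℕ} {B C L : Type u} [Ring B] [Algebra K B]
    [Ring C] [Algebra K C] [Ring L] [Algebra K L] {dB : IdemData K n B} {dC : IdemData K n C}
    (D : DualExt K n B C L dB dC) (i : Fin n) : Type u :=
  ↥(leftIdeal (D.ιB (dB.e i))) ⧸
    ((Submodule.span L {x : L | ∃ b, dB.IsRad b ∧ x = D.ιB b * D.ιB (dB.e i)}).comap
      (leftIdeal (D.ιB (dB.e i))).subtype)

noncomputable instance {K : Type u} [Field K] {n : ℕ} {B C L : Type u} [Ring B] [Algebra K B]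
    [Ring C] [Algebra K C] [Ring L] [Algebra K L] {dB : IdemData K n B} {dC : IdemData K n C}
    (D : DualExt K n B C L dB dC) (i : Fin n) : AddCommGroup (D.std i) :=
  by unfold DualExt.std; infer_instance

noncomputable instance {K : Type u} [Field K] {n : ℕ} {B C L : Type u} [Ring B] [Algebra K B]
    [Ring C] [Algebra K C] [Ring L] [Algebra K L] {dB : IdemData K n B} {dC : IdemData K n C}
    (D : DualExt K n B C L dB dC) (i : Fin n) : Module L (D.std i) :=
  by unfold DualExt.std; infer_instance

section stdInstances

variable {K : Type u} [Field K] {n : ℕ} {B C L : Type u} [Ring B] [Algebra K B]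
  [Ring C] [Algebra K C] [Ring L] [Algebra K L] {dB : IdemData K n B} {dC : IdemData K n C}

noncomputable instance (D : DualExt K n B C L dB dC) (i : Fin n) : Module K (D.std i) :=
  Module.compHom _ (algebraMap K L)

instance (D : DualExt K n B C L dB dC) (i : Fin n) : SMulCommClass L K (D.std i) := by
  constructor
  intro l k x
  show l • (algebraMap K L k • x) = algebraMap K L k • (l • x)
  rw [← mul_smul, ← mul_smul, Algebra.commutes]

instance (D : DualExt K n B C L dB dC) (i : Fin n) : IsScalarTower K L (D.std i) := by
  constructor
  intro k l x
  show (k • l) • x = algebraMap K L k • l • x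
  rw [← mul_smul, Algebra.smul_def]

end stdInstances

/-- A grading of a `K`-algebra by `ℕ` (e.g. the path-length grading of a quotient of a
path algebra). -/
structure AlgGrading (K : Type u) [Field K] (B : Type u) [Ring B] [Algebra K B] where
  gr : ℕ → Submodule K B
  internal : DirectSum.IsInternal gr
  one_mem : (1 : B) ∈ gr 0
  mul_mem : ∀ {a b : ℕ} {x y : B}, x ∈ gr a → y ∈ gr b → x * y ∈ gr (a + b)

/-- A graded module `M` (over the graded ring `R`) is generated in degree `m` if
`R · M_m = M`.  Here `M` is realized as a left-submodule `P ⊆ R`, with grading induced from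
the grading `g` of `R`; the condition says `P` is spanned over `R` by its degree-`m` part. -/
def GenInDeg {K : Type u} [Field K] {R : Type u} [Ring R] [Algebra K R]
    (g : AlgGrading K R) (P : Submodule R R) (m : ℕ) : Prop :=
  (P : Set R) ⊆ (Submodule.span R ((g.gr m : Set R) ∩ (P : Set R)) : Set R)

noncomputable instance {K : Type u} [Field K] {R : Type u} [Ring R] [Algebra K R]
    {M : Type u} [AddCommGroup M] [Module R M] (Q : ProjRes K R M) (k : ℕ) :
    Module K (Q.P k) :=
  Module.compHom _ (algebraMap K R)

/-- A linear resolution of the graded module `M` (with grading `gM`) over the graded algebra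
`(R, g)`: a projective resolution `⋯ → P 1 → P 0 → M` of graded modules (all maps of degree
`0`) in which `P k` is generated in degree `k`. -/
structure LinRes (K : Type u) [Field K] (R : Type u) [Ring R] [Algebra K R]
    (g : AlgGrading K R) (M : Type u) [AddCommGroup M] [Module R M] [Module K M]
    (gM : ℕ → Submodule K M) where
  res : ProjRes K R M
  grP : ∀ k, ℕ → Submodule K (res.P k)
  internal : ∀ k, DirectSum.IsInternal (grP k)
  smul_mem : ∀ (k : ℕ) {a b : ℕ} {x : R} {m : res.P k},
    x ∈ g.gr a → m ∈ grP k b → x • m ∈ grP k (a + b)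
  d_graded : ∀ (k a : ℕ), ∀ x ∈ grP (k + 1) a, res.d k x ∈ grP k a
  aug_graded : ∀ a : ℕ, ∀ x ∈ grP 0 a, res.aug x ∈ gM a
  gen : ∀ k, Submodule.span R ((grP k k : Set (res.P k))) = ⊤

/-- A graded algebra `(R, g)` with idempotent data `d` is Koszul if every simple module
(concentrated in degree `0`) admits a linear resolution. -/
def IsKoszul {K : Type u} [Field K] {n : ℕ} {R : Type u} [Ring R] [Algebra K R]
    (d : IdemData K n R) (g : AlgGrading K R) : Prop :=
  ∀ (i : Fin n) (S : Type u) [AddCommGroup S] [Module R S] [Module K S]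
    [IsScalarTower K R S], d.IsSimpleAt i S →
      Nonempty (LinRes K R g S (fun a => if a = 0 then (⊤ : Submodule K S) else ⊥))

/-- The grading induced on the standard module `Δ_Λ(i)` (a quotient of the graded module
`P_Λ(i) = Λ e i`) by a grading of `Λ`. -/
noncomputable def stdGrading {K : Type u} [Field K] {n : ℕ} {B C L : Type u} [Ring B]
    [Algebra K B] [Ring C] [Algebra K C] [Ring L] [Algebra K L] {dB : IdemData K n B}
    {dC : IdemData K n C} (D : DualExt K n B C L dB dC) (gL : AlgGrading K L) (i : Fin n) :
    ℕ → Submodule K (D.std i) := fun a =>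
  Submodule.map
    ((LinearMap.restrictScalars K (S := L) (M₂ := D.std i)
      ((((Submodule.span L {x : L | ∃ b, dB.IsRad b ∧ x = D.ιB b * D.ιB (dB.e i)}).comap
        (leftIdeal (D.ιB (dB.e i))).subtype).mkQ) :
          ↥(leftIdeal (D.ιB (dB.e i))) →ₗ[L] D.std i)) :
          ↥(leftIdeal (D.ιB (dB.e i))) →ₗ[K] D.std i)
    ((gL.gr a).comap (LinearMap.restrictScalars K (leftIdeal (D.ιB (dB.e i))).subtype))

/-- `Λ` (graded) is left standard Koszul: every left standard module `Δ_Λ(i)` has a linear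
resolution. -/
def LeftStandardKoszul {K : Type u} [Field K] {n : ℕ} {B C L : Type u} [Ring B]
    [Algebra K B] [Ring C] [Algebra K C] [Ring L] [Algebra K L] {dB : IdemData K n B}
    {dC : IdemData K n C} (D : DualExt K n B C L dB dC) (gL : AlgGrading K L) : Prop :=
  ∀ i : Fin n, Nonempty (LinRes K L gL (D.std i) (stdGrading D gL i))

/-- Lemma 5.6 of the paper.
Let `B` and `A` be directed algebras (with `C = A^op`) and endow `Λ = 𝒜(B, A^op)` with the
*alternate* grading: idempotents and arrows coming from `A^op` in degree `0` (so the whole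
image of `ιC` is in degree `0`), arrows coming from `B` in degree `1` (so `ιB` is graded,
for the path-length grading `gB` of `B`).  Suppose `Λ` is left standard Koszul for this
grading.  Then the homological and internal gradings on `Ext*_Λ(Δ, Δ)` coincide.
Concretely: by minimality of the resolutions, `Ext^k_Λ(Δ_Λ(i), Δ_Λ(j)) ≅ Hom_Λ(P^k, Δ_Λ(j))`
(cf. Statement 1), and the claim is that every such homomorphism `φ`, i.e. every element of
`Ext^k`, is homogeneous of internal degree `k`: it maps the internal-degree-`a` part of
`P^k` into the internal-degree-`(a - k)` part of `Δ_Λ(j)`. -/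
theorem statement7
    (K : Type) [Field K] [IsAlgClosed K] (n : ℕ)
    (B C L : Type) [Ring B] [Algebra K B] [Ring C] [Algebra K C] [Ring L] [Algebra K L]
    (dB : IdemData K n B) (dC : IdemData K n C)
    (hB : dB.Directed) (hC : dC.Codirected)
    (D : DualExt K n B C L dB dC)
    (dL : IdemData K n L) (hdL : ∀ i, dL.e i = D.ιB (dB.e i))
    -- the alternate grading `gL` on `Λ`; `gB` is the path-length grading of `B`
    (gB : AlgGrading K B) (gL : AlgGrading K L)
    (hgBe : ∀ i, dB.e i ∈ gB.gr 0)
    (hgB : ∀ (a : ℕ) (x : B), x ∈ gB.gr a → D.ιB x ∈ gL.gr a)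
    (hgC : ∀ c : C, D.ιC c ∈ gL.gr 0)
    (hgL : ∀ m₀ : ℕ, gL.gr m₀ = Submodule.span K {x : L |
      ∃ b : ℕ, b = m₀ ∧ ∃ c bb, bb ∈ gB.gr b ∧ x = D.ιC c * D.ιB bb})
    -- `Λ` is left standard Koszul (with respect to the alternate grading)
    (hLSK : LeftStandardKoszul D gL)
    (i j : Fin n) (k : ℕ)
    -- a minimal linear (graded) projective resolution of `Δ_Λ(i)`
    (LR : LinRes K L gL (D.std i) (stdGrading D gL i)) (hmin : LR.res.Minimal dL) :
    ∀ (φ : LR.res.P k →ₗ[L] D.std j) (a : ℕ) (x : LR.res.P k),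
      x ∈ LR.grP k a → φ x ∈ stdGrading D gL j (a - k) := by
  classical
  set eJ : L := D.ιB (dB.e j) with heJ
  set N : Submodule L L :=
    Submodule.span L {x : L | ∃ b, dB.IsRad b ∧ x = D.ιB b * D.ιB (dB.e j)} with hN
  -- N is closed under K-scalars
  have hNk : ∀ (c : K) (y : L), y ∈ N → c • y ∈ N := by
    intro c y hy
    have := N.smul_mem (algebraMap K L c) hy
    rwa [algebraMap_smul] at this
  -- idempotency
  have heJ2 : eJ * eJ = eJ := by
    rw [heJ, ← map_mul, dB.orth j j, if_pos rfl]
  -- degree ≥ 1 elements of B are radical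
  have hrad : ∀ m : ℕ, m ≠ 0 → ∀ bb ∈ gB.gr m, dB.IsRad bb := by
    intro m hm bb hbb i'
    obtain ⟨c, hc⟩ := hB.2.2 i' bb
    have h1 : dB.e i' * bb * dB.e i' ∈ gB.gr m := by
      have := gB.mul_mem (gB.mul_mem (hgBe i') hbb) (hgBe i')
      simpa using this
    have h2 : c • dB.e i' ∈ gB.gr 0 := (gB.gr 0).smul_mem c (hgBe i')
    rw [hc] at h1
    have hdisj : Disjoint (gB.gr m) (gB.gr 0) :=
      (gB.internal.submodule_iSupIndep.pairwiseDisjoint) hm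
    have h0 : c • dB.e i' = 0 := Submodule.disjoint_def.mp hdisj _ h1 h2
    rw [hc, h0]
  -- degree ≥ 1 elements of Λ, multiplied by e_j, are in N
  have hA : ∀ m : ℕ, m ≠ 0 → ∀ x ∈ gL.gr m, x * eJ ∈ N := by
    intro m hm x hx
    rw [hgL m] at hx
    induction hx using Submodule.span_induction with
    | mem x hx =>
        obtain ⟨b, rfl, c, bb, hbb, rfl⟩ := hx
        have hbbe : bb * dB.e j ∈ gB.gr b := by
          have := gB.mul_mem hbb (hgBe j); simpa using this
        have hradd : dB.IsRad (bb * dB.e j) := hrad b hm _ hbbe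
        have hgen : D.ιB (bb * dB.e j) ∈ N := by
          apply Submodule.subset_span
          refine ⟨bb * dB.e j, hradd, ?_⟩
          rw [← map_mul, mul_assoc, dB.orth j j, if_pos rfl]
        have := N.smul_mem (D.ιC c) hgen
        rw [smul_eq_mul] at this
        rw [mul_assoc, ← map_mul]
        exact this
    | zero => rw [zero_mul]; exact N.zero_mem
    | add x y hx hy ihx ihy => rw [add_mul]; exact N.add_mem ihx ihy
    | smul c x hx ih => rw [smul_mul_assoc]; exact hNk c _ ih
  -- every element of Λ lies in the span of the graded pieces
  have hTopL : ∀ z : L, z ∈ Submodule.span K (⋃ d, (gL.gr d : Set L)) := by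
    intro z
    rw [← Submodule.iSup_eq_span, gL.internal.submodule_iSup_eq_top]
    trivial
  -- extension: l of degree ≥ 1 times anything times e_j is in N
  have hA2 : ∀ m : ℕ, m ≠ 0 → ∀ l ∈ gL.gr m, ∀ z : L, l * z * eJ ∈ N := by
    intro m hm l hl z
    induction hTopL z using Submodule.span_induction with
    | mem z hz =>
        obtain ⟨S, ⟨d, rfl⟩, hzd⟩ := hz
        have : l * z ∈ gL.gr (m + d) := gL.mul_mem hl hzd
        exact hA (m + d) (by omega) _ this
    | zero => rw [mul_zero, zero_mul]; exact N.zero_mem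
    | add x y hx hy ihx ihy => rw [mul_add, add_mul]; exact N.add_mem ihx ihy
    | smul c x hx ih => rw [mul_smul_comm, smul_mul_assoc]; exact hNk c _ ih
  -- the quotient submodule defining the standard module
  set Nc : Submodule L ↥(leftIdeal (D.ιB (dB.e j))) :=
    (Submodule.span L {x : L | ∃ b, dB.IsRad b ∧ x = D.ιB b * D.ιB (dB.e j)}).comap
      (leftIdeal (D.ιB (dB.e j))).subtype with hNc
  have hsurj : ∀ v : D.std j, ∃ w, Nc.mkQ w = v := fun v => Nc.mkQ_surjective v
  -- degree ≥ 1 elements of Λ kill the standard module Δ(j)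
  have hkill : ∀ m : ℕ, m ≠ 0 → ∀ l ∈ gL.gr m, ∀ v : D.std j, l • v = 0 := by
    intro m hm l hl v
    obtain ⟨⟨z, hz⟩, rfl⟩ := hsurj v
    have : l • Nc.mkQ ⟨z, hz⟩ = Nc.mkQ (l • ⟨z, hz⟩) := (map_smul Nc.mkQ l _).symm
    refine this.trans ((Submodule.Quotient.mk_eq_zero (p := Nc)).mpr ?_)
    show l * z ∈ N
    have hz' : z * eJ = z := hz
    have hlz : l * z = l * z * eJ := by rw [mul_assoc, hz']
    rw [hlz]
    exact hA2 m hm l hl z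
  -- every element of Δ(j) has internal degree 0
  have key : ∀ z : L, ∃ y, y ∈ gL.gr 0 ∧ y * eJ = y ∧ z * eJ - y ∈ N := by
    intro z
    induction hTopL z using Submodule.span_induction with
    | mem z hzz =>
        obtain ⟨S, ⟨d, rfl⟩, hzd⟩ := hzz
        by_cases hd : d = 0
        · subst hd
          refine ⟨z * eJ, ?_, ?_, ?_⟩
          · have heJ0 : eJ ∈ gL.gr 0 := hgB 0 _ (hgBe j)
            have := gL.mul_mem hzd heJ0; simpa using this
          · rw [mul_assoc, heJ2]
          · rw [sub_self]; exact N.zero_mem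
        · exact ⟨0, (gL.gr 0).zero_mem, by rw [zero_mul], by
            rw [sub_zero]; exact hA d hd z hzd⟩
    | zero => exact ⟨0, (gL.gr 0).zero_mem, by rw [zero_mul], by
        rw [zero_mul, sub_zero]; exact N.zero_mem⟩
    | add x y hx hy ihx ihy =>
        obtain ⟨y₁, hy₁, hy₁e, hy₁N⟩ := ihx
        obtain ⟨y₂, hy₂, hy₂e, hy₂N⟩ := ihy
        refine ⟨y₁ + y₂, (gL.gr 0).add_mem hy₁ hy₂, by rw [add_mul, hy₁e, hy₂e], ?_⟩
        have heq : (x + y) * eJ - (y₁ + y₂) = (x * eJ - y₁) + (y * eJ - y₂) := by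
          rw [add_mul]; abel
        rw [heq]; exact N.add_mem hy₁N hy₂N
    | smul c x hx ih =>
        obtain ⟨y₁, hy₁, hy₁e, hy₁N⟩ := ih
        refine ⟨c • y₁, (gL.gr 0).smul_mem c hy₁, by rw [smul_mul_assoc, hy₁e], ?_⟩
        have heq : (c • x) * eJ - c • y₁ = c • (x * eJ - y₁) := by
          rw [smul_mul_assoc, smul_sub]
        rw [heq]; exact hNk c _ hy₁N
  have hdeg0 : ∀ v : D.std j, v ∈ stdGrading D gL j 0 := by
    intro v
    obtain ⟨⟨z, hz⟩, rfl⟩ := hsurj v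
    obtain ⟨y, hy0, hye, hyN⟩ := key z
    have hz' : z * eJ = z := hz
    rw [hz'] at hyN
    refine ⟨⟨y, hye⟩, hy0, ?_⟩
    show Nc.mkQ ⟨y, hye⟩ = Nc.mkQ ⟨z, hz⟩
    rw [Submodule.mkQ_apply, Submodule.mkQ_apply, Submodule.Quotient.eq]
    show (y - z : L) ∈ N
    rw [show (y - z : L) = -(z - y) from (neg_sub z y).symm]
    exact N.neg_mem hyN
  intro φ a x hx
  by_cases hak : a ≤ k
  · rw [Nat.sub_eq_zero_of_le hak]
    exact hdeg0 (φ x)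
  · -- a > k : show φ x = 0
    suffices hzero : φ x = 0 by rw [hzero]; exact (stdGrading D gL j (a - k)).zero_mem
    -- the graded projection onto degree a
    set E := LinearEquiv.ofBijective (DirectSum.coeLinearMap (LR.grP k)) (LR.internal k)
      with hE
    set π : LR.res.P k →ₗ[K] LR.res.P k :=
      (LR.grP k a).subtype ∘ₗ (DFinsupp.lapply a) ∘ₗ E.symm.toLinearMap with hπ
    have hπ_mem : ∀ {b : ℕ} {u : LR.res.P k}, u ∈ LR.grP k b →
        π u = if b = a then u else 0 := by
      intro b u hu
      by_cases hba : b = a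
      · subst hba
        show ((E.symm u) b : LR.res.P k) = _
        rw [hE, (LR.internal k).ofBijective_coeLinearMap_of_mem hu, if_pos rfl]
      · show ((E.symm u) a : LR.res.P k) = _
        rw [hE, (LR.internal k).ofBijective_coeLinearMap_of_mem_ne hba hu, if_neg hba]
        rfl
    -- K-scalars act through L
    have hKsmul : ∀ (c : K) (w : LR.res.P k), c • w = (algebraMap K L c) • w := fun _ _ => rfl
    -- the "positively-graded" part
    set Z : Submodule K (LR.res.P k) :=
      Submodule.span K {v : LR.res.P k | ∃ (m d : ℕ) (l : L) (y : LR.res.P k),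
        m ≠ 0 ∧ l ∈ gL.gr m ∧ y ∈ LR.grP k d ∧ v = l • y} with hZ
    -- φ kills π of anything in Z
    have hπZ : ∀ z ∈ Z, φ (π z) = 0 := by
      intro z hz
      induction hz using Submodule.span_induction with
      | mem z hzz =>
          obtain ⟨m, d, l, y, hm, hl, hy, rfl⟩ := hzz
          have hly : l • y ∈ LR.grP k (m + d) := LR.smul_mem k hl hy
          rw [hπ_mem hly]
          by_cases hmd : m + d = a
          · rw [if_pos hmd, map_smul]
            exact hkill m hm l hl (φ y)
          · rw [if_neg hmd, map_zero]
      | zero => rw [map_zero, map_zero]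
      | add x y hx hy ihx ihy => rw [map_add, map_add, ihx, ihy, add_zero]
      | smul c z hz ih =>
          rw [map_smul, hKsmul, map_smul, ih, smul_zero]
    -- L-scalar times a homogeneous generator stays in Z
    have hZgen : ∀ (l l' : L) (m d : ℕ) (y : LR.res.P k), m ≠ 0 → l' ∈ gL.gr m →
        y ∈ LR.grP k d → l • (l' • y) ∈ Z := by
      intro l l' m d y hm hl' hy
      induction hTopL l using Submodule.span_induction with
      | mem w hw =>
          obtain ⟨S, ⟨m', rfl⟩, hwm⟩ := hw
          rw [show w • l' • y = (w * l') • y from (mul_smul w l' y).symm]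
          exact Submodule.subset_span
            ⟨m' + m, d, w * l', y, by omega, gL.mul_mem hwm hl', hy, rfl⟩
      | zero => rw [zero_smul]; exact Z.zero_mem
      | add u v hu hv ihu ihv => rw [add_smul]; exact Z.add_mem ihu ihv
      | smul c u hu ih =>
          rw [show (c • u) • l' • y = c • (u • l' • y) by rw [Algebra.smul_def, mul_smul]; rfl]
          exact Z.smul_mem c ih
    -- Z is stable under L-scalars
    have hZsmul : ∀ (l : L) (z : LR.res.P k), z ∈ Z → l • z ∈ Z := by
      intro l z hz
      induction hz using Submodule.span_induction with
      | mem z hzz =>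
          obtain ⟨m, d, l', y, hm, hl', hy, rfl⟩ := hzz
          exact hZgen l l' m d y hm hl' hy
      | zero => rw [smul_zero]; exact Z.zero_mem
      | add x y hx hy ihx ihy => rw [smul_add]; exact Z.add_mem ihx ihy
      | smul c z hz ih =>
          rw [show l • c • z = c • (l • z) by
            rw [hKsmul c z, ← mul_smul, ← Algebra.commutes, mul_smul, ← hKsmul]]
          exact Z.smul_mem c ih
    -- L-scalar times a degree-k element lies in the sup
    have hLsmul1 : ∀ (l : L) (u₁ : LR.res.P k), u₁ ∈ LR.grP k k →
        l • u₁ ∈ (LR.grP k k ⊔ Z : Submodule K _) := by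
      intro l u₁ hu₁
      induction hTopL l using Submodule.span_induction with
      | mem w hw =>
          obtain ⟨S, ⟨m, rfl⟩, hwm⟩ := hw
          by_cases hm : m = 0
          · subst hm
            have h0 : w • u₁ ∈ LR.grP k (0 + k) := LR.smul_mem k hwm hu₁
            rw [zero_add] at h0
            exact Submodule.mem_sup_left h0
          · exact Submodule.mem_sup_right
              (Submodule.subset_span ⟨m, k, w, u₁, hm, hwm, hu₁, rfl⟩)
      | zero => rw [zero_smul]; exact Submodule.zero_mem _
      | add v w hv hw ihv ihw => rw [add_smul]; exact Submodule.add_mem _ ihv ihw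
      | smul c v hv ih =>
          rw [show (c • v) • u₁ = c • (v • u₁) by rw [Algebra.smul_def, mul_smul]; rfl]
          exact Submodule.smul_mem _ c ih
    -- every element lies in (grP k k) ⊔ Z
    have hLsmul : ∀ (l : L) (u : LR.res.P k), u ∈ (LR.grP k k ⊔ Z : Submodule K _) →
        l • u ∈ (LR.grP k k ⊔ Z : Submodule K _) := by
      intro l u hu
      obtain ⟨u₁, hu₁, u₂, hu₂, rfl⟩ := Submodule.mem_sup.mp hu
      rw [smul_add]
      exact Submodule.add_mem _ (hLsmul1 l u₁ hu₁) (Submodule.mem_sup_right (hZsmul l u₂ hu₂))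
    have hcoverAll : ∀ w : LR.res.P k, w ∈ (LR.grP k k ⊔ Z : Submodule K _) := by
      intro w
      have hxtop : w ∈ Submodule.span L ((LR.grP k k : Set (LR.res.P k))) := by
        rw [LR.gen k]; trivial
      induction hxtop using Submodule.span_induction with
      | mem z hzz => exact Submodule.mem_sup_left hzz
      | zero => exact Submodule.zero_mem _
      | add v w hv hw ihv ihw => exact Submodule.add_mem _ ihv ihw
      | smul l v hv ih => exact hLsmul l v ih
    obtain ⟨u, hu, z, hzz, hxuz⟩ := Submodule.mem_sup.mp (hcoverAll x)
    have hπx : π x = x := by rw [hπ_mem hx, if_pos rfl]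
    have hπu : π u = 0 := by rw [hπ_mem hu, if_neg (by omega)]
    have : π x = π z := by
      rw [← hxuz, map_add, hπu, zero_add]
    rw [← hπx, this]
    exact hπZ z hzz
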